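/- Suppose r ≥ 1 and A ∈ E_k(n,r), regarded as an n×n block matrix A = (A^p_q). If, for some fixed 1 ≤ i,j ≤ n, all blocks in the i-th block row and in the j-th block column of A other than A^i_j are zero, then A is a special invariant in E_k(n,r)^i_j. -/
import Mathlib


open Finset

/-- The value-type of a multi-index `i ∈ I(n,r)`, encoded as the equivalence
relation on places whose classes are the blocks `{α : i α = v}`. -/
def vt {n r : ℕ} (i : Fin r → Fin n) : Fin r → Fin r → Prop :=
  fun a b => i a = i b

/-- Condition (G): for each place `α` and each pair of multi-indices obtained by
deleting place `α`, all row and column `α`-slice sums equal a common scalar. -/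
def CondG (k : Type*) [CommRing k] (n r : ℕ)
    (A : Matrix (Fin r → Fin n) (Fin r → Fin n) k) : Prop :=
  ∀ (α : Fin r) (i j : Fin r → Fin n), ∃ b : k,
    (∀ y : Fin n, (∑ x : Fin n, A (Function.update i α x) (Function.update j α y)) = b) ∧
    (∀ x : Fin n, (∑ y : Fin n, A (Function.update i α x) (Function.update j α y)) = b)

/-- Condition (H): entries vanish when row and column indices have different value-types. -/
def CondH (k : Type*) [CommRing k] (n r : ℕ)
    (A : Matrix (Fin r → Fin n) (Fin r → Fin n) k) : Prop :=
  ∀ i j : Fin r → Fin n, vt i ≠ vt j → A i j = 0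

/-- Condition (S): invariance under simultaneous place permutation of rows and columns. -/
def CondS (k : Type*) [CommRing k] (n r : ℕ)
    (A : Matrix (Fin r → Fin n) (Fin r → Fin n) k) : Prop :=
  ∀ (σ : Equiv.Perm (Fin r)) (i j : Fin r → Fin n), A (i ∘ σ) (j ∘ σ) = A i j

/-- Membership in the centralizer algebra `E_k(n,r) = End_{P_r(n)}(V^{⊗r})`. -/
def MemE (k : Type*) [CommRing k] (n r : ℕ)
    (A : Matrix (Fin r → Fin n) (Fin r → Fin n) k) : Prop :=
  CondG k n r A ∧ CondH k n r A ∧ CondS k n r A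

/-- The restriction `ρ(A) ∈ Mat_{I(n,r-1)}(k)`: its `(p,q)`-entry is the slice sum
`Σ_x a^{p x}_{q 0}`, which for `A ∈ E_k(n,r)` is the common value of all slice
sums of `A` indexed by `p, q`. -/
def rho (k : Type*) [CommRing k] (n r : ℕ) [NeZero n]
    (A : Matrix (Fin (r+1) → Fin n) (Fin (r+1) → Fin n) k) :
    Matrix (Fin r → Fin n) (Fin r → Fin n) k :=
  Matrix.of fun p q => ∑ x : Fin n, A (Fin.snoc p x) (Fin.snoc q 0)

/-- The `k`-module `E_k(n,r)^i_j` of special invariants: those `A ∈ E_k(n,r)` such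
that `A s t ≠ 0` implies `Λ_i(s) = Λ_j(t)`. -/
def MemESpec (k : Type*) [CommRing k] (n r : ℕ) (i j : Fin n)
    (A : Matrix (Fin r → Fin n) (Fin r → Fin n) k) : Prop :=
  MemE k n r A ∧ ∀ s t : Fin r → Fin n, A s t ≠ 0 → ∀ α : Fin r, s α = i ↔ t α = j

/-- The `r`-th Kronecker power `P(w)^{⊗r}` of the permutation matrix of `w`. -/
def kron (k : Type*) [CommRing k] (n r : ℕ) (w : Equiv.Perm (Fin n)) :
    Matrix (Fin r → Fin n) (Fin r → Fin n) k :=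
  Matrix.of fun i j => if i = ⇑w ∘ j then 1 else 0

/-- For `r ≥ 1` (represented as `r+1`) and `A ∈ E_k(n,r)` regarded as an n×n block
matrix: if all blocks in the `i`-th block row and in the `j`-th block column other
than the block `A^i_j` are zero, then `A` is a special invariant in `E_k(n,r)^i_j`. -/
theorem stmt_7 {k : Type*} [CommRing k] {n r : ℕ}
    (A : Matrix (Fin (r+1) → Fin n) (Fin (r+1) → Fin n) k)
    (hA : MemE k n (r+1) A) (i j : Fin n)
    (hrow : ∀ q : Fin n, q ≠ j → ∀ s t : Fin r → Fin n,
      A (Fin.cons i s) (Fin.cons q t) = 0)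
    (hcol : ∀ p : Fin n, p ≠ i → ∀ s t : Fin r → Fin n,
      A (Fin.cons p s) (Fin.cons j t) = 0) :
    MemESpec k n (r+1) i j A := by
  refine ⟨hA, fun s t hst α => ?_⟩
  have hS := hA.2.2 (Equiv.swap (0 : Fin (r+1)) α) s t
  have h0s : (s ∘ (Equiv.swap (0 : Fin (r+1)) α)) 0 = s α := by
    simp [Equiv.swap_apply_left]
  have h0t : (t ∘ (Equiv.swap (0 : Fin (r+1)) α)) 0 = t α := by
    simp [Equiv.swap_apply_left]
  have hne : A (s ∘ (Equiv.swap (0 : Fin (r+1)) α)) (t ∘ (Equiv.swap (0 : Fin (r+1)) α)) ≠ 0 := by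
    rwa [hS]
  constructor
  · intro hi
    by_contra hj
    apply hne
    have h : A (Fin.cons ((s ∘ (Equiv.swap (0 : Fin (r+1)) α)) 0)
        (Fin.tail (s ∘ (Equiv.swap (0 : Fin (r+1)) α))))
        (Fin.cons ((t ∘ (Equiv.swap (0 : Fin (r+1)) α)) 0)
        (Fin.tail (t ∘ (Equiv.swap (0 : Fin (r+1)) α)))) = 0 := by
      rw [h0s, h0t, hi]
      exact hrow (t α) hj _ _
    rwa [Fin.cons_self_tail, Fin.cons_self_tail] at h
  · intro hj
    by_contra hi
    apply hne
    have h : A (Fin.cons ((s ∘ (Equiv.swap (0 : Fin (r+1)) α)) 0)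
        (Fin.tail (s ∘ (Equiv.swap (0 : Fin (r+1)) α))))
        (Fin.cons ((t ∘ (Equiv.swap (0 : Fin (r+1)) α)) 0)
        (Fin.tail (t ∘ (Equiv.swap (0 : Fin (r+1)) α)))) = 0 := by
      rw [h0s, h0t, hj]
      exact hcol (s α) hi _ _
    rwa [Fin.cons_self_tail, Fin.cons_self_tail] at h
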